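/- Let A be a nonempty closed and geodesically convex subset of the l∞ plane ℝ²_∞, and let p ∈ ℝ²_∞. Then there exists a point q ∈ A such that d∞(a, q) ≤ d∞(a, p) for every a ∈ A; equivalently, the one-point extension A ∪ {p} admits a nonexpansive retraction onto A. -/
import Mathlib


/-- A geodesic from `p` to `q` in a metric space: an isometric embedding of the
real interval `[0, dist p q]` sending `0` to `p` and `dist p q` to `q`. -/
def IsGeodesic {X : Type*} [MetricSpace X] (p q : X) (γ : ℝ → X) : Prop :=
  γ 0 = p ∧ γ (dist p q) = q ∧
    ∀ s ∈ Set.Icc (0 : ℝ) (dist p q), ∀ t ∈ Set.Icc (0 : ℝ) (dist p q),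
      dist (γ s) (γ t) = |s - t|

/-- A subset `A` is geodesically convex if any two of its points are joined by a
geodesic of the ambient space whose image lies in `A`. -/
def GeodConvex {X : Type*} [MetricSpace X] (A : Set X) : Prop :=
  ∀ p ∈ A, ∀ q ∈ A, ∃ γ : ℝ → X, IsGeodesic p q γ ∧
    ∀ t ∈ Set.Icc (0 : ℝ) (dist p q), γ t ∈ A

namespace OPRAux

open Set

/-- Rotated coordinate `u = x₁ + x₂`. -/
def mu (x : ℝ × ℝ) : ℝ := x.1 + x.2

/-- Rotated coordinate `v = x₁ - x₂`. -/
def nu (x : ℝ × ℝ) : ℝ := x.1 - x.2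

lemma max_abs (a b : ℝ) : 2 * max |a| |b| = |a + b| + |a - b| := by
  rcases abs_cases a with ⟨h1, h1'⟩ | ⟨h1, h1'⟩ <;>
    rcases abs_cases b with ⟨h2, h2'⟩ | ⟨h2, h2'⟩ <;>
    rcases abs_cases (a + b) with ⟨h3, h3'⟩ | ⟨h3, h3'⟩ <;>
    rcases abs_cases (a - b) with ⟨h4, h4'⟩ | ⟨h4, h4'⟩ <;>
    rcases max_cases |a| |b| with ⟨h5, h5'⟩ | ⟨h5, h5'⟩ <;>
    linarith

/-- The `ℓ∞` distance in the rotated coordinates. -/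
lemma two_dist (x y : ℝ × ℝ) : 2 * dist x y = |mu x - mu y| + |nu x - nu y| := by
  have h := max_abs (x.1 - y.1) (x.2 - y.2)
  have e1 : x.1 - y.1 + (x.2 - y.2) = mu x - mu y := by simp only [mu]; ring
  have e2 : x.1 - y.1 - (x.2 - y.2) = nu x - nu y := by simp only [nu]; ring
  rw [e1, e2] at h
  rw [Prod.dist_eq, Real.dist_eq, Real.dist_eq]
  exact h

lemma two_dist' (x y : ℝ × ℝ) : 2 * dist x y = |nu x - nu y| + |mu x - mu y| := by
  rw [two_dist]; ring

lemma between_of_abs_eq {u v x : ℝ} (h : |v - u| = |v - x| + |x - u|) :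
    min u v ≤ x ∧ x ≤ max u v := by
  have h1 : v - x ≤ |v - x| := le_abs_self _
  have h2 : x - u ≤ |x - u| := le_abs_self _
  have h3 : x - v ≤ |v - x| := by rw [abs_sub_comm]; exact le_abs_self _
  have h4 : u - x ≤ |x - u| := by rw [abs_sub_comm]; exact le_abs_self _
  have h5 : max u v - min u v = |v - u| := by
    rw [max_sub_min_eq_abs]
  have h6 : min u v + max u v = u + v := min_add_max u v
  constructor <;> linarith

lemma abs_add_of_nonpos_mul {x y : ℝ} (h : x * y ≤ 0) : |x - y| = |x| + |y| := by
  rcases mul_nonpos_iff.mp h with ⟨hx, hy⟩ | ⟨hx, hy⟩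
  · rw [abs_of_nonneg hx, abs_of_nonpos hy, abs_of_nonneg (by linarith)]
    ring
  · rw [abs_of_nonpos hx, abs_of_nonneg hy, abs_of_nonpos (by linarith)]
    ring

lemma sign_trans {x y z : ℝ} (h1 : 0 < x * y) (h2 : 0 < y * z) : 0 < x * z := by
  rcases mul_pos_iff.mp h1 with ⟨hx, hy⟩ | ⟨hx, hy⟩ <;>
    rcases mul_pos_iff.mp h2 with ⟨hy', hz⟩ | ⟨hy', hz⟩ <;>
    first
      | exact mul_pos hx hz
      | exact mul_pos_of_neg_of_neg hx hz
      | linarith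

lemma sign2 {x y z : ℝ} (h1 : x * y ≤ 0) (h2 : 0 < y * z) : x * z ≤ 0 := by
  rcases mul_pos_iff.mp h2 with ⟨hy, hz⟩ | ⟨hy, hz⟩
  · have hx : x ≤ 0 := by nlinarith
    exact mul_nonpos_iff.mpr (Or.inr ⟨hx, hz.le⟩)
  · have hx : 0 ≤ x := by nlinarith
    exact mul_nonpos_iff.mpr (Or.inl ⟨hx, hz.le⟩)

lemma between_sign {q1 q2 w r : ℝ} (h1 : 0 < q1 * r) (h2 : 0 < q2 * r)
    (hlo : min q1 q2 ≤ w) (hhi : w ≤ max q1 q2) : 0 < w * r := by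
  rcases mul_pos_iff.mp h1 with ⟨ha, hr⟩ | ⟨ha, hr⟩ <;>
    rcases mul_pos_iff.mp h2 with ⟨hb, hr'⟩ | ⟨hb, hr'⟩
  · exact mul_pos (lt_of_lt_of_le (lt_min ha hb) hlo) hr
  · linarith
  · linarith
  · exact mul_pos_of_neg_of_neg (lt_of_le_of_lt hhi (max_lt ha hb)) hr

lemma side_abs {Ma M0 mx : ℝ} (h : 0 < Ma * M0) (hlo : min 0 M0 ≤ mx)
    (hhi : mx ≤ max 0 M0) (hm : |mx| ≤ |Ma|) : |Ma - mx| = |Ma| - |mx| := by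
  rcases mul_pos_iff.mp h with ⟨h1, h2⟩ | ⟨h1, h2⟩
  · have hx : 0 ≤ mx := (min_eq_left h2.le) ▸ hlo
    rw [abs_of_nonneg hx, abs_of_pos h1] at hm
    rw [abs_of_pos h1, abs_of_nonneg hx, abs_of_nonneg (by linarith : (0:ℝ) ≤ Ma - mx)]
  · have hx : mx ≤ 0 := (max_eq_left h2.le) ▸ hhi
    rw [abs_of_nonpos hx, abs_of_neg h1] at hm
    rw [abs_of_neg h1, abs_of_nonpos hx, abs_of_nonpos (by linarith : Ma - mx ≤ 0)]
    ring

lemma shift_bounds {u v x : ℝ} (hlo : min u v ≤ x) (hhi : x ≤ max u v) :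
    min 0 (v - u) ≤ x - u ∧ x - u ≤ max 0 (v - u) := by
  rcases le_total u v with h | h
  · rw [min_eq_left h] at hlo; rw [max_eq_right h] at hhi
    constructor
    · rw [min_eq_left (by linarith : (0:ℝ) ≤ v - u)]; linarith
    · rw [max_eq_right (by linarith : (0:ℝ) ≤ v - u)]; linarith
  · rw [min_eq_right h] at hlo; rw [max_eq_left h] at hhi
    constructor
    · rw [min_eq_right (by linarith : v - u ≤ (0:ℝ))]; linarith
    · rw [max_eq_left (by linarith : v - u ≤ (0:ℝ))]; linarith

/-- Basic facts about a point `γ t` on a geodesic, phrased for an abstract pair of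
"coordinates" `f`, `g` satisfying the distance identity. -/
lemma geo_facts {y w : ℝ × ℝ} {γ : ℝ → ℝ × ℝ} (h : IsGeodesic y w γ)
    (f g : (ℝ × ℝ) → ℝ)
    (hfg : ∀ u v : ℝ × ℝ, 2 * dist u v = |f u - f v| + |g u - g v|)
    {t : ℝ} (ht0 : 0 ≤ t) (htT : t ≤ dist y w) :
    dist y (γ t) = t ∧
      |f w - f y| = |f w - f (γ t)| + |f (γ t) - f y| ∧
      |g w - g y| = |g w - g (γ t)| + |g (γ t) - g y| := by
  obtain ⟨h0, hT, hd⟩ := h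
  have m0 : (0:ℝ) ∈ Icc (0:ℝ) (dist y w) := ⟨le_refl 0, dist_nonneg⟩
  have mt : t ∈ Icc (0:ℝ) (dist y w) := ⟨ht0, htT⟩
  have mT : dist y w ∈ Icc (0:ℝ) (dist y w) := ⟨dist_nonneg, le_refl _⟩
  have d1 : dist y (γ t) = t := by
    have h := hd 0 m0 t mt
    rw [h0] at h
    rw [h, zero_sub, abs_neg, abs_of_nonneg ht0]
  have d2 : dist (γ t) w = dist y w - t := by
    have h := hd t mt (dist y w) mT
    rw [hT] at h
    rw [h, abs_of_nonpos (by linarith), neg_sub]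
  have e1 := hfg w y
  have e2 := hfg w (γ t)
  have e3 := hfg (γ t) y
  rw [dist_comm w y] at e1
  rw [dist_comm w (γ t), d2] at e2
  rw [dist_comm (γ t) y, d1] at e3
  have habf := abs_sub_le (f w) (f (γ t)) (f y)
  have habg := abs_sub_le (g w) (g (γ t)) (g y)
  exact ⟨d1, by linarith, by linarith⟩

/-- Crossing lemma: along a geodesic in `A` joining `x₁` to `x₂`, the coordinate `f`
takes any intermediate value `c`, at a point whose `g`-coordinate lies between the
`g`-coordinates of the endpoints. -/
lemma crossing {A : Set (ℝ × ℝ)} (hgc : GeodConvex A) {x₁ x₂ : ℝ × ℝ}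
    (h1 : x₁ ∈ A) (h2 : x₂ ∈ A) (f g : (ℝ × ℝ) → ℝ)
    (hfg : ∀ u v : ℝ × ℝ, 2 * dist u v = |f u - f v| + |g u - g v|)
    {c : ℝ} (hc1 : f x₁ ≤ c) (hc2 : c ≤ f x₂) :
    ∃ w ∈ A, f w = c ∧ min (g x₁) (g x₂) ≤ g w ∧ g w ≤ max (g x₁) (g x₂) := by
  obtain ⟨γ, hγ, hγA⟩ := hgc x₁ h1 x₂ h2
  have h0 : γ 0 = x₁ := hγ.1
  have hT : γ (dist x₁ x₂) = x₂ := hγ.2.1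
  have hd := hγ.2.2
  have hcont : ContinuousOn (fun s => f (γ s)) (Icc 0 (dist x₁ x₂)) := by
    rw [Metric.continuousOn_iff]
    intro b hb ε hε
    refine ⟨ε / 2, by linarith, fun a ha hab => ?_⟩
    have hda : dist (γ a) (γ b) = |a - b| := hd a ha b hb
    have hfa := hfg (γ a) (γ b)
    have h1 : |f (γ a) - f (γ b)| ≤ 2 * dist (γ a) (γ b) := by
      have := abs_nonneg (g (γ a) - g (γ b)); linarith
    rw [Real.dist_eq]
    rw [Real.dist_eq] at hab
    rw [hda] at h1
    calc |f (γ a) - f (γ b)| ≤ 2 * |a - b| := h1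
      _ < ε := by linarith
  have hmem : c ∈ Icc ((fun s => f (γ s)) 0) ((fun s => f (γ s)) (dist x₁ x₂)) := by
    simp only
    rw [h0, hT]
    exact ⟨hc1, hc2⟩
  obtain ⟨t₀, ht₀mem, ht₀⟩ := intermediate_value_Icc dist_nonneg hcont hmem
  obtain ⟨-, -, trg⟩ := geo_facts hγ f g hfg ht₀mem.1 ht₀mem.2
  have hb := between_of_abs_eq (u := g x₁) (v := g x₂) (x := g (γ t₀)) trg
  exact ⟨γ t₀, hγA t₀ ht₀mem, ht₀, hb.1, hb.2⟩

/-- Moving along a geodesic from `y` towards a point `w` with the same `g`-coordinate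
decreases by exactly `t` the distance to points on the same strict `f`-side as `w`. -/
lemma descend {A : Set (ℝ × ℝ)} (hgc : GeodConvex A) (f g : (ℝ × ℝ) → ℝ)
    (hfg : ∀ u v : ℝ × ℝ, 2 * dist u v = |f u - f v| + |g u - g v|)
    {y w : ℝ × ℝ} (hy : y ∈ A) (hw : w ∈ A) (hgw : g w = g y)
    {t : ℝ} (ht0 : 0 < t) (htT : t ≤ dist y w) :
    ∃ x' ∈ A, dist y x' = t ∧
      ∀ a : ℝ × ℝ, 0 < (f a - f y) * (f w - f y) → 2 * t ≤ |f a - f y| →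
        dist a x' = dist a y - t := by
  obtain ⟨γ, hγ, hγA⟩ := hgc y hy w hw
  obtain ⟨d1, trf, trg⟩ := geo_facts hγ f g hfg ht0.le htT
  set x' := γ t with hx'
  -- g is constant along the geodesic up to t
  have hgx : g x' = g y := by
    rw [hgw, sub_self, abs_zero] at trg
    have h1 := abs_nonneg (g y - g x')
    have h2 := abs_nonneg (g x' - g y)
    have h3 : |g x' - g y| = 0 := by linarith
    have h4 := abs_eq_zero.mp h3
    linarith [sub_eq_zero.mp h4]
  -- |f x' - f y| = 2t
  have hfx : |f x' - f y| = 2 * t := by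
    have h := hfg x' y
    rw [dist_comm x' y, d1] at h
    rw [hgx, sub_self, abs_zero] at h
    linarith
  have hbet := between_of_abs_eq (u := f y) (v := f w) (x := f x') trf
  refine ⟨x', hγA t ⟨ht0.le, htT⟩, d1, ?_⟩
  intro a ha hmargin
  obtain ⟨hlo, hhi⟩ := shift_bounds hbet.1 hbet.2
  have hm : |f x' - f y| ≤ |f a - f y| := by rw [hfx]; exact hmargin
  have hside := side_abs ha hlo hhi hm
  have heq : f a - f x' = (f a - f y) - (f x' - f y) := by ring
  have h1 := hfg a x'
  have h2 := hfg a y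
  rw [heq] at h1
  rw [hside, hfx] at h1
  have hga : g a - g x' = g a - g y := by rw [hgx]
  rw [hga] at h1
  linarith

/-- Moving along a geodesic from `y` towards `a₀` decreases by exactly `t` the distance
to points on the same strict side as `a₀` in both rotated coordinates. -/
lemma descend2 {A : Set (ℝ × ℝ)} (hgc : GeodConvex A) {y a₀ : ℝ × ℝ}
    (hy : y ∈ A) (ha₀ : a₀ ∈ A) {t : ℝ} (ht0 : 0 < t) (htT : t ≤ dist y a₀) :
    ∃ x' ∈ A, dist y x' = t ∧
      ∀ a : ℝ × ℝ, 0 < (mu a - mu y) * (mu a₀ - mu y) →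
        0 < (nu a - nu y) * (nu a₀ - nu y) →
        2 * t ≤ |mu a - mu y| → 2 * t ≤ |nu a - nu y| →
        dist a x' = dist a y - t := by
  obtain ⟨γ, hγ, hγA⟩ := hgc y hy a₀ ha₀
  obtain ⟨d1, trf, trg⟩ := geo_facts hγ mu nu two_dist ht0.le htT
  set x' := γ t with hx'
  have hsum : |mu x' - mu y| + |nu x' - nu y| = 2 * t := by
    have h := two_dist x' y
    rw [dist_comm x' y, d1] at h
    linarith
  have hbmu := between_of_abs_eq (u := mu y) (v := mu a₀) (x := mu x') trf
  have hbnu := between_of_abs_eq (u := nu y) (v := nu a₀) (x := nu x') trg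
  refine ⟨x', hγA t ⟨ht0.le, htT⟩, d1, ?_⟩
  intro a hPa hQa hPm hQm
  obtain ⟨hlo1, hhi1⟩ := shift_bounds hbmu.1 hbmu.2
  obtain ⟨hlo2, hhi2⟩ := shift_bounds hbnu.1 hbnu.2
  have hm1 : |mu x' - mu y| ≤ |mu a - mu y| := by
    have := abs_nonneg (nu x' - nu y); linarith
  have hm2 : |nu x' - nu y| ≤ |nu a - nu y| := by
    have := abs_nonneg (mu x' - mu y); linarith
  have hside1 := side_abs hPa hlo1 hhi1 hm1
  have hside2 := side_abs hQa hlo2 hhi2 hm2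
  have heq1 : mu a - mu x' = (mu a - mu y) - (mu x' - mu y) := by ring
  have heq2 : nu a - nu x' = (nu a - nu y) - (nu x' - nu y) := by ring
  have h1 := two_dist a x'
  have h2 := two_dist a y
  rw [heq1, heq2, hside1, hside2] at h1
  linarith


/-- The key finite intersection lemma: for any finite set `S` of points of `A`
there is a point of `A` that is at least as close as `p` to every member of `S`. -/
lemma finite_good {A : Set (ℝ × ℝ)} (hne : A.Nonempty) (hcl : IsClosed A)
    (hgc : GeodConvex A) (p : ℝ × ℝ) (S : Finset (ℝ × ℝ)) (hSA : ∀ a ∈ S, a ∈ A) :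
    ∃ x ∈ A, ∀ a ∈ S, dist a x ≤ dist a p := by
  classical
  rcases S.eq_empty_or_nonempty with rfl | hSne
  · exact ⟨hne.some, hne.some_mem, by simp⟩
  obtain ⟨a₁, ha₁S⟩ := hSne
  have hSne : S.Nonempty := ⟨a₁, ha₁S⟩
  set Φ : (ℝ × ℝ) → ℝ := fun x => S.sup' hSne (fun a => dist a x - dist a p) with hΦdef
  have hΦx : ∀ x : ℝ × ℝ, Φ x = S.sup' hSne (fun a => dist a x - dist a p) := fun _ => rfl
  have hΦge : ∀ (x : ℝ × ℝ), ∀ a ∈ S, dist a x - dist a p ≤ Φ x := by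
    intro x a ha
    rw [hΦx]
    exact Finset.le_sup' (fun a => dist a x - dist a p) ha
  have hΦle : ∀ x x' : ℝ × ℝ, Φ x ≤ Φ x' + dist x x' := by
    intro x x'
    rw [hΦx]
    apply Finset.sup'_le
    intro a ha
    have h1 := dist_triangle a x' x
    have h2 := hΦge x' a ha
    have h3 : dist x' x = dist x x' := dist_comm _ _
    linarith
  have hΦcont : Continuous Φ := by
    have hlip : LipschitzWith 1 Φ := by
      apply LipschitzWith.of_dist_le_mul
      intro x x'
      rw [Real.dist_eq, NNReal.coe_one, one_mul, abs_sub_le_iff]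
      have h3 : dist x' x = dist x x' := dist_comm _ _
      constructor
      · linarith [hΦle x x']
      · linarith [hΦle x' x]
    exact hlip.continuous
  set R : ℝ := dist a₁ p + |Φ a₁| + 1 with hR
  have hR0 : 0 ≤ R := by
    rw [hR]
    have := dist_nonneg (x := a₁) (y := p)
    have := abs_nonneg (Φ a₁)
    linarith
  set C : Set (ℝ × ℝ) := A ∩ Metric.closedBall a₁ R with hC
  have hCcomp : IsCompact C :=
    IsCompact.of_isClosed_subset (isCompact_closedBall a₁ R)
      (hcl.inter Metric.isClosed_closedBall) Set.inter_subset_right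
  have ha₁C : a₁ ∈ C := ⟨hSA a₁ ha₁S, Metric.mem_closedBall_self hR0⟩
  have hCne : C.Nonempty := ⟨a₁, ha₁C⟩
  obtain ⟨y, hyC, hymin⟩ := hCcomp.exists_isMinOn hCne hΦcont.continuousOn
  have hyA : y ∈ A := hyC.1
  set m := Φ y with hm
  have hmin : ∀ x ∈ A, m ≤ Φ x := by
    intro x hx
    by_cases hxC : x ∈ Metric.closedBall a₁ R
    · exact isMinOn_iff.mp hymin x ⟨hx, hxC⟩
    · have h1 : dist a₁ x - dist a₁ p ≤ Φ x := hΦge x a₁ ha₁S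
      have h2 : R < dist x a₁ := by
        rw [Metric.mem_closedBall] at hxC
        push_neg at hxC
        exact hxC
      have h3 : m ≤ Φ a₁ := isMinOn_iff.mp hymin a₁ ha₁C
      have h4 : Φ a₁ ≤ |Φ a₁| := le_abs_self _
      have h5 : dist a₁ x = dist x a₁ := dist_comm _ _
      linarith
  by_cases hm0 : m ≤ 0
  · refine ⟨y, hyA, fun a ha => ?_⟩
    have h1 := hΦge y a ha
    rw [← hm] at h1
    linarith
  push_neg at hm0
  exfalso
  have hub : ∀ a ∈ S, dist a y - dist a p ≤ m := by
    intro a ha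
    have := hΦge y a ha
    rw [← hm] at this
    exact this
  obtain ⟨aw, hawS, hawEq⟩ := Finset.exists_mem_eq_sup' hSne (fun a => dist a y - dist a p)
  have hawact : dist aw y = dist aw p + m := by
    have h1 : m = dist aw y - dist aw p := by
      rw [hm, hΦx]
      exact hawEq
    linarith
  -- no pair of "active" constraints lies in opposite quadrants around y
  have hnop : ∀ a ∈ S, ∀ b ∈ S, dist a y = dist a p + m → dist b y = dist b p + m →
      (mu a - mu y) * (mu b - mu y) ≤ 0 →
      0 < (nu a - nu y) * (nu b - nu y) := by
    intro a ha b hb hacta hactb hPle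
    by_contra hQle
    push_neg at hQle
    have e1 : |mu a - mu b| = |mu a - mu y| + |mu b - mu y| := by
      have h := abs_add_of_nonpos_mul hPle
      have h2 : mu a - mu b = mu a - mu y - (mu b - mu y) := by ring
      rw [h2, h]
    have e2 : |nu a - nu b| = |nu a - nu y| + |nu b - nu y| := by
      have h := abs_add_of_nonpos_mul hQle
      have h2 : nu a - nu b = nu a - nu y - (nu b - nu y) := by ring
      rw [h2, h]
    have d1 := two_dist a b
    have d2 := two_dist a y
    have d3 := two_dist b y
    have tri : dist a b ≤ dist a p + dist b p := by
      have h := dist_triangle a p b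
      have h2 : dist p b = dist b p := dist_comm _ _
      linarith
    rw [e1, e2] at d1
    linarith
  -- endgame: a point of A strictly decreasing all active constraints (and not
  -- increasing the rest too much) contradicts minimality of y
  have endgame : ∀ x' ∈ A, ∀ t : ℝ, 0 < t → dist y x' = t →
      (∀ a ∈ S, dist a y = dist a p + m → dist a x' = dist a y - t) →
      (∀ a ∈ S, ¬(dist a y = dist a p + m) → t < dist a p + m - dist a y) → False := by
    intro x' hx' t ht0 hdyx' hdec hmarg
    have hlt : S.sup' hSne (fun a => dist a x' - dist a p) < m := by
      rw [Finset.sup'_lt_iff hSne]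
      intro a ha
      by_cases hact : dist a y = dist a p + m
      · have h := hdec a ha hact
        rw [h, hact]
        linarith
      · have h3 := dist_triangle a y x'
        rw [hdyx'] at h3
        have := hmarg a ha hact
        linarith
    have h := hmin x' hx'
    rw [hΦx x'] at h
    linarith
  -- small positive step sizes
  have mkt : ∀ ρ : (ℝ × ℝ) → ℝ, (∀ a ∈ S, 0 < ρ a) → ∀ Tlen : ℝ, 0 < Tlen →
      ∃ t : ℝ, 0 < t ∧ t ≤ Tlen ∧ ∀ a ∈ S, 2 * t ≤ ρ a ∧ t < ρ a := by
    intro ρ hρ Tlen hT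
    have hinf : 0 < S.inf' hSne ρ := (Finset.lt_inf'_iff hSne).mpr hρ
    refine ⟨min Tlen (S.inf' hSne ρ / 2), lt_min hT (by linarith), min_le_left _ _, ?_⟩
    intro a ha
    have h1 : S.inf' hSne ρ ≤ ρ a := Finset.inf'_le _ ha
    have h2 : min Tlen (S.inf' hSne ρ / 2) ≤ S.inf' hSne ρ / 2 := min_le_right _ _
    have h0 := hρ a ha
    constructor <;> linarith
  have hmargin : ∀ a ∈ S, ¬(dist a y = dist a p + m) → 0 < dist a p + m - dist a y := by
    intro a ha hact
    have h1 := hub a ha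
    have h2 : dist a y - dist a p ≠ m := fun h => hact (by linarith)
    have h3 : dist a y - dist a p < m := lt_of_le_of_ne h1 h2
    linarith
  by_cases hC1 : ∃ a ∈ S, dist a y = dist a p + m ∧ nu a - nu y = 0
  · -- an active constraint on the ν-axis: all actives on one strict μ-side
    obtain ⟨a₀, ha₀S, ha₀act, ha₀Q⟩ := hC1
    have hside : ∀ a ∈ S, dist a y = dist a p + m →
        0 < (mu a - mu y) * (mu a₀ - mu y) := by
      intro a ha hact
      by_contra hle
      push_neg at hle
      have h := hnop a ha a₀ ha₀S hact ha₀act hle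
      rw [ha₀Q, mul_zero] at h
      exact lt_irrefl 0 h
    have hd0 : 0 < dist y a₀ := by
      have h2 : dist y a₀ = dist a₀ y := dist_comm _ _
      have h3 := dist_nonneg (x := a₀) (y := p)
      rw [h2, ha₀act]
      linarith
    set ρ : (ℝ × ℝ) → ℝ := fun a =>
      if dist a y = dist a p + m then |mu a - mu y| else dist a p + m - dist a y with hρ
    have hρpos : ∀ a ∈ S, 0 < ρ a := by
      intro a ha
      by_cases hact : dist a y = dist a p + m
      · simp only [hρ, if_pos hact]
        rcases mul_pos_iff.mp (hside a ha hact) with ⟨h1, _⟩ | ⟨h1, _⟩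
        · exact abs_pos.mpr (ne_of_gt h1)
        · exact abs_pos.mpr (ne_of_lt h1)
      · simp only [hρ, if_neg hact]
        exact hmargin a ha hact
    obtain ⟨t, ht0, htT, htb⟩ := mkt ρ hρpos (dist y a₀) hd0
    have hnuEq : nu a₀ = nu y := by linarith [ha₀Q]
    obtain ⟨x', hx'A, hdyx', hdec⟩ :=
      descend hgc mu nu two_dist hyA (hSA a₀ ha₀S) hnuEq ht0 htT
    apply endgame x' hx'A t ht0 hdyx'
    · intro a ha hact
      apply hdec a (hside a ha hact)
      have h := (htb a ha).1
      simp only [hρ, if_pos hact] at h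
      exact h
    · intro a ha hact
      have h := (htb a ha).2
      simp only [hρ, if_neg hact] at h
      exact h
  by_cases hC2 : ∃ a ∈ S, dist a y = dist a p + m ∧ mu a - mu y = 0
  · -- an active constraint on the μ-axis: all actives on one strict ν-side
    obtain ⟨a₀, ha₀S, ha₀act, ha₀P⟩ := hC2
    have hside : ∀ a ∈ S, dist a y = dist a p + m →
        0 < (nu a - nu y) * (nu a₀ - nu y) := by
      intro a ha hact
      apply hnop a ha a₀ ha₀S hact ha₀act
      rw [ha₀P, mul_zero]
    have hd0 : 0 < dist y a₀ := by
      have h2 : dist y a₀ = dist a₀ y := dist_comm _ _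
      have h3 := dist_nonneg (x := a₀) (y := p)
      rw [h2, ha₀act]
      linarith
    set ρ : (ℝ × ℝ) → ℝ := fun a =>
      if dist a y = dist a p + m then |nu a - nu y| else dist a p + m - dist a y with hρ
    have hρpos : ∀ a ∈ S, 0 < ρ a := by
      intro a ha
      by_cases hact : dist a y = dist a p + m
      · simp only [hρ, if_pos hact]
        rcases mul_pos_iff.mp (hside a ha hact) with ⟨h1, _⟩ | ⟨h1, _⟩
        · exact abs_pos.mpr (ne_of_gt h1)
        · exact abs_pos.mpr (ne_of_lt h1)
      · simp only [hρ, if_neg hact]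
        exact hmargin a ha hact
    obtain ⟨t, ht0, htT, htb⟩ := mkt ρ hρpos (dist y a₀) hd0
    have hmuEq : mu a₀ = mu y := by linarith [ha₀P]
    obtain ⟨x', hx'A, hdyx', hdec⟩ :=
      descend hgc nu mu two_dist' hyA (hSA a₀ ha₀S) hmuEq ht0 htT
    apply endgame x' hx'A t ht0 hdyx'
    · intro a ha hact
      apply hdec a (hside a ha hact)
      have h := (htb a ha).1
      simp only [hρ, if_pos hact] at h
      exact h
    · intro a ha hact
      have h := (htb a ha).2
      simp only [hρ, if_neg hact] at h
      exact h
  push_neg at hC1 hC2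
  by_cases hPmix : ∃ a ∈ S, ∃ b ∈ S, dist a y = dist a p + m ∧ dist b y = dist b p + m ∧
      (mu a - mu y) * (mu b - mu y) ≤ 0
  · -- μ-signs of actives are mixed: all ν-signs agree; cross the μ-level of y
    obtain ⟨aa, haaS, bb, hbbS, haact, hbact, hPle⟩ := hPmix
    have hQab : 0 < (nu aa - nu y) * (nu bb - nu y) := hnop aa haaS bb hbbS haact hbact hPle
    have hQall : ∀ c ∈ S, dist c y = dist c p + m →
        0 < (nu c - nu y) * (nu aa - nu y) := by
      intro c hc hactc
      by_contra hle
      push_neg at hle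
      have h1 : 0 < (mu c - mu y) * (mu aa - mu y) := by
        by_contra hP
        push_neg at hP
        exact absurd (hnop c hc aa haaS hactc haact hP) (not_lt.mpr hle)
      have h2q : (nu c - nu y) * (nu bb - nu y) ≤ 0 := sign2 hle hQab
      have h2 : 0 < (mu c - mu y) * (mu bb - mu y) := by
        by_contra hP
        push_neg at hP
        exact absurd (hnop c hc bb hbbS hactc hbact hP) (not_lt.mpr h2q)
      have h1' : 0 < (mu aa - mu y) * (mu c - mu y) := by
        rw [mul_comm]
        exact h1
      have h3 := sign_trans h1' h2
      exact absurd h3 (not_lt.mpr hPle)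
    have haaP : mu aa - mu y ≠ 0 := hC2 aa haaS haact
    have hbbP : mu bb - mu y ≠ 0 := hC2 bb hbbS hbact
    have hPlt : (mu aa - mu y) * (mu bb - mu y) < 0 :=
      lt_of_le_of_ne hPle (mul_ne_zero haaP hbbP)
    have hexists : ∃ an ∈ S, ∃ ap ∈ S, dist an y = dist an p + m ∧
        dist ap y = dist ap p + m ∧ mu an < mu y ∧ mu y < mu ap := by
      rcases mul_neg_iff.mp hPlt with ⟨h1, h2⟩ | ⟨h1, h2⟩
      · exact ⟨bb, hbbS, aa, haaS, hbact, haact, by linarith, by linarith⟩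
      · exact ⟨aa, haaS, bb, hbbS, haact, hbact, by linarith, by linarith⟩
    obtain ⟨an, hanS, ap, hapS, hanact, hapact, hanlt, haplt⟩ := hexists
    obtain ⟨w, hwA, hwmu, hwlo, hwhi⟩ :=
      crossing hgc (hSA an hanS) (hSA ap hapS) mu nu two_dist (c := mu y) hanlt.le haplt.le
    have hQan : 0 < (nu an - nu y) * (nu aa - nu y) := hQall an hanS hanact
    have hQap : 0 < (nu ap - nu y) * (nu aa - nu y) := hQall ap hapS hapact
    have hwlo' : min (nu an - nu y) (nu ap - nu y) ≤ nu w - nu y := by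
      rw [min_sub_sub_right]
      linarith
    have hwhi' : nu w - nu y ≤ max (nu an - nu y) (nu ap - nu y) := by
      rw [max_sub_sub_right]
      linarith
    have hQw : 0 < (nu w - nu y) * (nu aa - nu y) :=
      between_sign hQan hQap hwlo' hwhi'
    have hQwne : nu w - nu y ≠ 0 := by
      intro h
      rw [h, zero_mul] at hQw
      exact lt_irrefl 0 hQw
    have hd0 : 0 < dist y w := by
      rw [dist_pos]
      intro h
      exact hQwne (by rw [← h, sub_self])
    have hsideQ : ∀ c ∈ S, dist c y = dist c p + m →
        0 < (nu c - nu y) * (nu w - nu y) := by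
      intro c hc hactc
      have h1 := hQall c hc hactc
      have h2 : 0 < (nu aa - nu y) * (nu w - nu y) := by
        rw [mul_comm]
        exact hQw
      exact sign_trans h1 h2
    set ρ : (ℝ × ℝ) → ℝ := fun a =>
      if dist a y = dist a p + m then |nu a - nu y| else dist a p + m - dist a y with hρ
    have hρpos : ∀ a ∈ S, 0 < ρ a := by
      intro a ha
      by_cases hact : dist a y = dist a p + m
      · simp only [hρ, if_pos hact]
        exact abs_pos.mpr (hC1 a ha hact)
      · simp only [hρ, if_neg hact]
        exact hmargin a ha hact
    obtain ⟨t, ht0, htT, htb⟩ := mkt ρ hρpos (dist y w) hd0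
    have hmuEq : mu w = mu y := hwmu
    obtain ⟨x', hx'A, hdyx', hdec⟩ :=
      descend hgc nu mu two_dist' hyA hwA hmuEq ht0 htT
    apply endgame x' hx'A t ht0 hdyx'
    · intro a ha hact
      apply hdec a (hsideQ a ha hact)
      have h := (htb a ha).1
      simp only [hρ, if_pos hact] at h
      exact h
    · intro a ha hact
      have h := (htb a ha).2
      simp only [hρ, if_neg hact] at h
      exact h
  push_neg at hPmix
  by_cases hQmix : ∃ a ∈ S, ∃ b ∈ S, dist a y = dist a p + m ∧ dist b y = dist b p + m ∧
      (nu a - nu y) * (nu b - nu y) ≤ 0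
  · -- ν-signs of actives are mixed (μ-signs all agree): cross the ν-level of y
    obtain ⟨aa, haaS, bb, hbbS, haact, hbact, hQle⟩ := hQmix
    have haaQ : nu aa - nu y ≠ 0 := hC1 aa haaS haact
    have hbbQ : nu bb - nu y ≠ 0 := hC1 bb hbbS hbact
    have hQlt : (nu aa - nu y) * (nu bb - nu y) < 0 :=
      lt_of_le_of_ne hQle (mul_ne_zero haaQ hbbQ)
    have hexists : ∃ an ∈ S, ∃ ap ∈ S, dist an y = dist an p + m ∧
        dist ap y = dist ap p + m ∧ nu an < nu y ∧ nu y < nu ap := by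
      rcases mul_neg_iff.mp hQlt with ⟨h1, h2⟩ | ⟨h1, h2⟩
      · exact ⟨bb, hbbS, aa, haaS, hbact, haact, by linarith, by linarith⟩
      · exact ⟨aa, haaS, bb, hbbS, haact, hbact, by linarith, by linarith⟩
    obtain ⟨an, hanS, ap, hapS, hanact, hapact, hanlt, haplt⟩ := hexists
    obtain ⟨w, hwA, hwnu, hwlo, hwhi⟩ :=
      crossing hgc (hSA an hanS) (hSA ap hapS) nu mu two_dist' (c := nu y) hanlt.le haplt.le
    have hwlo' : min (mu an - mu y) (mu ap - mu y) ≤ mu w - mu y := by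
      rw [min_sub_sub_right]
      linarith
    have hwhi' : mu w - mu y ≤ max (mu an - mu y) (mu ap - mu y) := by
      rw [max_sub_sub_right]
      linarith
    have hsideP : ∀ c ∈ S, dist c y = dist c p + m →
        0 < (mu c - mu y) * (mu w - mu y) := by
      intro c hc hactc
      have h1 : 0 < (mu an - mu y) * (mu c - mu y) := hPmix an hanS c hc hanact hactc
      have h2 : 0 < (mu ap - mu y) * (mu c - mu y) := hPmix ap hapS c hc hapact hactc
      have h3 : 0 < (mu w - mu y) * (mu c - mu y) := between_sign h1 h2 hwlo' hwhi'
      rw [mul_comm]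
      exact h3
    have hwP : 0 < (mu aw - mu y) * (mu w - mu y) := hsideP aw hawS hawact
    have hPwne : mu w - mu y ≠ 0 := by
      intro h
      rw [h, mul_zero] at hwP
      exact lt_irrefl 0 hwP
    have hd0 : 0 < dist y w := by
      rw [dist_pos]
      intro h
      exact hPwne (by rw [← h, sub_self])
    set ρ : (ℝ × ℝ) → ℝ := fun a =>
      if dist a y = dist a p + m then |mu a - mu y| else dist a p + m - dist a y with hρ
    have hρpos : ∀ a ∈ S, 0 < ρ a := by
      intro a ha
      by_cases hact : dist a y = dist a p + m
      · simp only [hρ, if_pos hact]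
        exact abs_pos.mpr (hC2 a ha hact)
      · simp only [hρ, if_neg hact]
        exact hmargin a ha hact
    obtain ⟨t, ht0, htT, htb⟩ := mkt ρ hρpos (dist y w) hd0
    obtain ⟨x', hx'A, hdyx', hdec⟩ :=
      descend hgc mu nu two_dist hyA hwA hwnu ht0 htT
    apply endgame x' hx'A t ht0 hdyx'
    · intro a ha hact
      apply hdec a (hsideP a ha hact)
      have h := (htb a ha).1
      simp only [hρ, if_pos hact] at h
      exact h
    · intro a ha hact
      have h := (htb a ha).2
      simp only [hρ, if_neg hact] at h
      exact h
  push_neg at hQmix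
  · -- all actives strictly in one quadrant: walk straight at one of them
    have hd0 : 0 < dist y aw := by
      have h2 : dist y aw = dist aw y := dist_comm _ _
      have h3 := dist_nonneg (x := aw) (y := p)
      rw [h2, hawact]
      linarith
    set ρ : (ℝ × ℝ) → ℝ := fun a =>
      if dist a y = dist a p + m then min |mu a - mu y| |nu a - nu y|
      else dist a p + m - dist a y with hρ
    have hρpos : ∀ a ∈ S, 0 < ρ a := by
      intro a ha
      by_cases hact : dist a y = dist a p + m
      · simp only [hρ, if_pos hact]
        exact lt_min (abs_pos.mpr (hC2 a ha hact)) (abs_pos.mpr (hC1 a ha hact))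
      · simp only [hρ, if_neg hact]
        exact hmargin a ha hact
    obtain ⟨t, ht0, htT, htb⟩ := mkt ρ hρpos (dist y aw) hd0
    obtain ⟨x', hx'A, hdyx', hdec⟩ := descend2 hgc hyA (hSA aw hawS) ht0 htT
    apply endgame x' hx'A t ht0 hdyx'
    · intro a ha hact
      have h := (htb a ha).1
      simp only [hρ, if_pos hact] at h
      have hmm := le_min_iff.mp h
      apply hdec a (hPmix a ha aw hawS hact hawact) (hQmix a ha aw hawS hact hawact)
        hmm.1 hmm.2
    · intro a ha hact
      have h := (htb a ha).2
      simp only [hρ, if_neg hact] at h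
      exact h

end OPRAux

/-- For any nonempty closed geodesically convex `A ⊆ ℝ²_∞` and any point
`p ∈ ℝ²_∞` there is `q ∈ A` with `d∞(a,q) ≤ d∞(a,p)` for all `a ∈ A`; i.e. the
one-point extension `A ∪ {p}` retracts nonexpansively onto `A`. -/
theorem one_point_extension_retracts (A : Set (ℝ × ℝ)) (hne : A.Nonempty)
    (hcl : IsClosed A) (hgc : GeodConvex A) (p : ℝ × ℝ) :
    ∃ q ∈ A, ∀ a ∈ A, dist a q ≤ dist a p := by
  classical
  obtain ⟨a₀, ha₀⟩ := hne
  by_cases hne2 : (A ∩ Metric.closedBall a₀ (dist a₀ p) ∩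
      ⋂ a : {a // a ∈ A}, {x | dist a.1 x ≤ dist a.1 p}).Nonempty
  · obtain ⟨q, hq⟩ := hne2
    refine ⟨q, hq.1.1, fun a ha => ?_⟩
    exact Set.mem_iInter.mp hq.2 ⟨a, ha⟩
  · exfalso
    rw [Set.not_nonempty_iff_eq_empty] at hne2
    have hscomp : IsCompact (A ∩ Metric.closedBall a₀ (dist a₀ p)) :=
      IsCompact.of_isClosed_subset (isCompact_closedBall a₀ (dist a₀ p))
        (hcl.inter Metric.isClosed_closedBall) Set.inter_subset_right
    obtain ⟨u, hu⟩ := hscomp.elim_finite_subfamily_closed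
      (fun a : {a // a ∈ A} => {x | dist a.1 x ≤ dist a.1 p})
      (fun a => isClosed_le (continuous_const.dist continuous_id) continuous_const) hne2
    set S : Finset (ℝ × ℝ) := insert a₀ (u.image Subtype.val) with hS
    have hSA : ∀ a ∈ S, a ∈ A := by
      intro a ha
      rw [hS, Finset.mem_insert] at ha
      rcases ha with rfl | ha
      · exact ha₀
      · obtain ⟨b, hb, rfl⟩ := Finset.mem_image.mp ha
        exact b.property
    obtain ⟨x, hxA, hx⟩ := OPRAux.finite_good ⟨a₀, ha₀⟩ hcl hgc p S hSA
    have hxball : x ∈ Metric.closedBall a₀ (dist a₀ p) := by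
      rw [Metric.mem_closedBall, dist_comm]
      exact hx a₀ (by rw [hS]; exact Finset.mem_insert_self _ _)
    have hxint : x ∈ ⋂ a ∈ u, {x : ℝ × ℝ | dist a.1 x ≤ dist a.1 p} := by
      rw [Set.mem_iInter₂]
      intro a ha
      exact hx a.1 (by
        rw [hS]
        exact Finset.mem_insert_of_mem (Finset.mem_image_of_mem Subtype.val ha))
    have hxmem : x ∈ A ∩ Metric.closedBall a₀ (dist a₀ p) ∩
        ⋂ a ∈ u, {x : ℝ × ℝ | dist a.1 x ≤ dist a.1 p} := ⟨⟨hxA, hxball⟩, hxint⟩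
    rw [hu] at hxmem
    exact absurd hxmem (Set.notMem_empty x)
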